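/- arXiv:2603.03349 — 2 statements merged into one kernel-verified Lean document; each statement's English description precedes it below -/
import Mathlib

section
/- For every λ > 1, the polynomial Ψ(ρ) = λρ⁴ + (2λ − 1)ρ³ + λρ² + 2ρ − 1 is strictly increasing on (0, 1) and has a unique root in the interval (0, (√5 − 1)/2), with Ψ(0) = −1 < 0 and Ψ((√5−1)/2) = λ > 0. -/
theorem stmt_7 (l : ℝ) (hl : 1 < l) :
    StrictMonoOn (fun ρ : ℝ => l*ρ^4 + (2*l - 1)*ρ^3 + l*ρ^2 + 2*ρ - 1)
      (Set.Ioo 0 1) ∧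
    (∃! ρ : ℝ, ρ ∈ Set.Ioo 0 ((Real.sqrt 5 - 1)/2) ∧
      l*ρ^4 + (2*l - 1)*ρ^3 + l*ρ^2 + 2*ρ - 1 = 0) ∧
    (l*(0:ℝ)^4 + (2*l - 1)*(0:ℝ)^3 + l*(0:ℝ)^2 + 2*(0:ℝ) - 1 = -1) ∧ (-1:ℝ) < 0 ∧
    (l*((Real.sqrt 5 - 1)/2)^4 + (2*l - 1)*((Real.sqrt 5 - 1)/2)^3
      + l*((Real.sqrt 5 - 1)/2)^2 + 2*((Real.sqrt 5 - 1)/2) - 1 = l) ∧ 0 < l := by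
  set c : ℝ := (Real.sqrt 5 - 1)/2 with hc
  have hs5 : (Real.sqrt 5)^2 = 5 := Real.sq_sqrt (by norm_num)
  have hs5lb : (2:ℝ) < Real.sqrt 5 := by
    nlinarith [Real.sqrt_nonneg 5]
  have hs5ub : Real.sqrt 5 < 3 := by
    nlinarith [Real.sqrt_nonneg 5]
  have hc0 : 0 < c := by rw [hc]; linarith
  have hc1 : c < 1 := by rw [hc]; linarith
  have hcsq : c^2 + c - 1 = 0 := by
    rw [hc]; nlinarith [hs5]
  set f : ℝ → ℝ := fun ρ : ℝ => l*ρ^4 + (2*l - 1)*ρ^3 + l*ρ^2 + 2*ρ - 1 with hf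
  have hmono : StrictMonoOn f (Set.Ioo 0 1) := by
    intro x hx y hy hxy
    simp only [hf, Set.mem_Ioo] at *
    have key : (l*y^4 + (2*l - 1)*y^3 + l*y^2 + 2*y - 1) - (l*x^4 + (2*l - 1)*x^3 + l*x^2 + 2*x - 1)
        = (y - x) * (l*(y^3+y^2*x+y*x^2+x^3) + (2*l-1)*(y^2+y*x+x^2) + l*(y+x) + 2) := by ring
    have hpos : 0 < l*(y^3+y^2*x+y*x^2+x^3) + (2*l-1)*(y^2+y*x+x^2) + l*(y+x) + 2 := by
      have hx0 := hx.1; have hy0 := hy.1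
      have h1 : 0 < l*(y^3+y^2*x+y*x^2+x^3) := mul_pos (by linarith) (by positivity)
      have h2 : 0 < (2*l-1)*(y^2+y*x+x^2) := mul_pos (by linarith) (by positivity)
      have h3 : 0 < l*(y+x) := mul_pos (by linarith) (by positivity)
      linarith
    nlinarith [mul_pos (sub_pos.2 hxy) hpos]
  have hfc : f c = l := by
    simp only [hf]
    linear_combination (l*c^2 + (l-1)*c + (l+1)) * hcsq
  refine ⟨hmono, ?_, by norm_num, by norm_num, hfc, by linarith⟩
  have hcont : ContinuousOn f (Set.Icc 0 c) := by
    apply Continuous.continuousOn; simp only [hf]; continuity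
  have hiv := intermediate_value_Ioo (le_of_lt hc0) hcont
  have h0mem : (0:ℝ) ∈ Set.Ioo (f 0) (f c) := by
    constructor
    · simp only [hf]; norm_num
    · rw [hfc]; linarith
  obtain ⟨ρ, hρmem, hρ⟩ := hiv h0mem
  refine ⟨ρ, ⟨hρmem, hρ⟩, ?_⟩
  rintro y ⟨hymem, hy⟩
  have hsub : Set.Ioo 0 c ⊆ Set.Ioo 0 1 := Set.Ioo_subset_Ioo le_rfl (le_of_lt hc1)
  exact hmono.injOn (hsub hymem) (hsub hρmem) (hy.trans hρ.symm)
end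

section
/- Let a ∈ [0, 1), t ∈ [0, 1], and ρ ∈ [0, 1). If ρ satisfies (4t − 3)ρ² − 2ρ + 1 < 0, then there exists a ∈ [0, 1) such that 2ρ²(1 − t)a² − ((2t − 1)ρ² − ρ)a + ρ − 1 > 0. -/
theorem stmt_11 (t ρ : ℝ) (ht : t ∈ Set.Icc (0:ℝ) 1) (hρ : ρ ∈ Set.Ico (0:ℝ) 1)
    (h : (4*t - 3)*ρ^2 - 2*ρ + 1 < 0) :
    ∃ a ∈ Set.Ico (0:ℝ) 1,
      0 < 2*ρ^2*(1 - t)*a^2 - ((2*t - 1)*ρ^2 - ρ)*a + ρ - 1 := by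
  set f : ℝ → ℝ := fun a => 2*ρ^2*(1 - t)*a^2 - ((2*t - 1)*ρ^2 - ρ)*a + ρ - 1 with hf
  have hc : Continuous f := by unfold f; continuity
  have h1 : 0 < f 1 := by simp only [hf]; nlinarith
  have hopen : IsOpen {x : ℝ | 0 < f x} := isOpen_lt continuous_const hc
  obtain ⟨δ, hδ, hball⟩ := Metric.isOpen_iff.mp hopen 1 h1
  set a : ℝ := 1 - min δ 1 / 2 with ha
  have hmin : 0 < min δ 1 := lt_min hδ one_pos
  have hle : min δ 1 ≤ 1 := min_le_right _ _
  refine ⟨a, ⟨by simp only [ha]; linarith, by simp only [ha]; linarith⟩, ?_⟩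
  have : a ∈ Metric.ball (1:ℝ) δ := by
    simp only [Metric.mem_ball, Real.dist_eq, ha]
    rw [abs_of_nonpos (by linarith)]
    have : min δ 1 ≤ δ := min_le_left _ _
    linarith
  exact hball this
end
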